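/- Let G be either ℂ or the open unit disk 𝔻 ⊂ ℂ, and let H(G) be the space of holomorphic functions on G endowed with the topology of uniform convergence on compact sets. The Volterra operator V : H(G) → H(G), (Vf)(z) = ∫_0^z f(ζ) dζ, is power bounded and uniformly mean ergodic. In particular: for every compact set K ⊂ G there exist a compact set L ⊂ G and C > 0 such that sup_{z∈K} |(V^m f)(z)| ≤ C · sup_{z∈L} |f(z)| for all m ∈ ℕ and all f ∈ H(G); and for every f ∈ H(G) the Cesàro means (1/n)∑_{m=1}^{n} V^m f converge in H(G) as n → ∞. -/

import Mathlib

open Filter Finset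

noncomputable section

/-- The `n`-th Cesàro mean `T^{[n]} = (1/n) ∑_{m=1}^n T^m` of an operator on `ℂ → ℂ`. -/
def cesaroC (T : (ℂ → ℂ) → ℂ → ℂ) (n : ℕ) (f : ℂ → ℂ) : ℂ → ℂ :=
  (n : ℂ)⁻¹ • ∑ m ∈ Icc 1 n, T^[m] f

/-- The Volterra operator `(Vf)(z) = ∫_0^z f(ζ) dζ`, written via the segment from `0` to `z`. -/
def volterra (f : ℂ → ℂ) : ℂ → ℂ := fun z => z * ∫ t in (0:ℝ)..1, f ((t : ℂ) * z)

lemma star_mem {G : Set ℂ} (hG : G = Set.univ ∨ G = Metric.ball 0 1)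
    {z : ℂ} (hz : z ∈ G) {t : ℝ} (ht : t ∈ Set.Icc (0:ℝ) 1) : (t : ℂ) * z ∈ G := by
  rcases hG with rfl | rfl
  · trivial
  · simp only [Metric.mem_ball, dist_zero_right] at hz ⊢
    calc ‖(t : ℂ) * z‖ = |t| * ‖z‖ := by
          rw [norm_mul, Complex.norm_real, Real.norm_eq_abs]
      _ ≤ 1 * ‖z‖ := by
          apply mul_le_mul_of_nonneg_right _ (norm_nonneg _)
          rw [abs_of_nonneg ht.1]; exact ht.2
      _ < 1 := by rw [one_mul]; exact hz

lemma exists_rho {G : Set ℂ} (hG : G = Set.univ ∨ G = Metric.ball 0 1)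
    {z : ℂ} (hz : z ∈ G) : ∃ ρ : ℝ, ‖z‖ < ρ ∧ Metric.closedBall 0 ρ ⊆ G := by
  rcases hG with rfl | rfl
  · exact ⟨‖z‖ + 1, by linarith, Set.subset_univ _⟩
  · rw [Metric.mem_ball, dist_zero_right] at hz
    refine ⟨(‖z‖ + 1) / 2, by linarith, Metric.closedBall_subset_ball (by linarith)⟩

lemma volterra_diffOn {G : Set ℂ} (hG : G = Set.univ ∨ G = Metric.ball 0 1)
    {f : ℂ → ℂ} (hf : DifferentiableOn ℂ f G) : DifferentiableOn ℂ (volterra f) G := by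
  have hGo : IsOpen G := by
    rcases hG with rfl | rfl; exacts [isOpen_univ, Metric.isOpen_ball]
  intro z₀ hz₀
  suffices h : DifferentiableAt ℂ (volterra f) z₀ from h.differentiableWithinAt
  obtain ⟨ρ, hρ, hsub⟩ := exists_rho hG hz₀
  set ε : ℝ := ρ - ‖z₀‖ with hε
  have hεpos : 0 < ε := sub_pos.2 hρ
  -- membership fact
  have hmem : ∀ x ∈ Metric.ball z₀ ε, ∀ t ∈ Set.Icc (0:ℝ) 1,
      (t : ℂ) * x ∈ Metric.closedBall (0:ℂ) ρ := by
    intro x hx t ht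
    rw [Metric.mem_closedBall, dist_zero_right]
    have hxρ : ‖x‖ < ρ := by
      rw [Metric.mem_ball, dist_eq_norm] at hx
      calc ‖x‖ ≤ ‖x - z₀‖ + ‖z₀‖ := by
            simpa using norm_add_le (x - z₀) z₀
        _ < ε + ‖z₀‖ := by linarith
        _ = ρ := by simp [hε]
    calc ‖(t : ℂ) * x‖ = |t| * ‖x‖ := by
          rw [norm_mul, Complex.norm_real, Real.norm_eq_abs]
      _ ≤ 1 * ‖x‖ := mul_le_mul_of_nonneg_right
          (by rw [abs_of_nonneg ht.1]; exact ht.2) (norm_nonneg _)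
      _ ≤ ρ := by rw [one_mul]; exact hxρ.le
  have hfc : ContinuousOn f G := hf.continuousOn
  have hf' : ContinuousOn (deriv f) G :=
    (hf.contDiffOn (n := 1) hGo).continuousOn_deriv_of_isOpen hGo le_rfl
  obtain ⟨C, hC⟩ := (isCompact_closedBall (0:ℂ) ρ).exists_bound_of_continuousOn
    (hf'.mono hsub)
  have hIoc : Set.uIoc (0:ℝ) 1 ⊆ Set.Icc (0:ℝ) 1 := by
    rw [Set.uIoc_of_le zero_le_one]; exact Set.Ioc_subset_Icc_self
  have hcontmap : ∀ x : ℂ, Continuous (fun t : ℝ => (t : ℂ) * x) :=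
    fun x => Complex.continuous_ofReal.mul continuous_const
  -- the parametric integral
  have key : HasDerivAt (fun x : ℂ => ∫ t in (0:ℝ)..1, f ((t : ℂ) * x))
      (∫ t in (0:ℝ)..1, (t : ℂ) * deriv f ((t : ℂ) * z₀)) z₀ := by
    refine (intervalIntegral.hasDerivAt_integral_of_dominated_loc_of_deriv_le
      (F := fun x t => f ((t : ℂ) * x))
      (F' := fun x t => (t : ℂ) * deriv f ((t : ℂ) * x))
      (bound := fun _ => |C|) (Metric.ball_mem_nhds z₀ hεpos) ?_ ?_ ?_ ?_ ?_ ?_).2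
    · filter_upwards [Metric.ball_mem_nhds z₀ hεpos] with x hx
      refine ((hfc.mono hsub).comp (hcontmap x).continuousOn
        (fun t ht => hmem x hx t (hIoc ht))).aestronglyMeasurable measurableSet_uIoc
    · apply ContinuousOn.intervalIntegrable
      refine (hfc.mono hsub).comp (hcontmap z₀).continuousOn (fun t ht => ?_)
      exact hmem z₀ (Metric.mem_ball_self hεpos) t
        (by rwa [Set.uIcc_of_le zero_le_one] at ht)
    · refine (ContinuousOn.mul (Complex.continuous_ofReal.continuousOn) ?_).aestronglyMeasurable
        measurableSet_uIoc
      refine ((hf'.mono hsub).comp (hcontmap z₀).continuousOn (fun t ht => ?_))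
      exact hmem z₀ (Metric.mem_ball_self hεpos) t (hIoc ht)
    · refine Filter.Eventually.of_forall (fun t ht x hx => ?_)
      have ht' : t ∈ Set.Icc (0:ℝ) 1 := hIoc ht
      calc ‖(t : ℂ) * deriv f ((t : ℂ) * x)‖ = |t| * ‖deriv f ((t : ℂ) * x)‖ := by
            rw [norm_mul, Complex.norm_real, Real.norm_eq_abs]
        _ ≤ 1 * |C| := mul_le_mul (by rw [abs_of_nonneg ht'.1]; exact ht'.2)
            ((hC _ (hmem x hx t ht')).trans (le_abs_self C)) (norm_nonneg _) zero_le_one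
        _ = |C| := one_mul _
    · exact intervalIntegrable_const
    · refine Filter.Eventually.of_forall (fun t ht x hx => ?_)
      have ht' : t ∈ Set.Icc (0:ℝ) 1 := hIoc ht
      have h1 : HasDerivAt f (deriv f ((t : ℂ) * x)) ((t : ℂ) * x) :=
        (hf.differentiableAt (hGo.mem_nhds (hsub (hmem x hx t ht')))).hasDerivAt
      have h2 : HasDerivAt (fun y : ℂ => (t : ℂ) * y) (t : ℂ) x := by
        simpa using (hasDerivAt_id x).const_mul (t : ℂ)
      have h3 := h1.comp x h2
      rw [mul_comm] at h3
      exact h3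
  exact ((differentiableAt_id).mul key.differentiableAt : DifferentiableAt ℂ _ z₀)

lemma iter_bound {G : Set ℂ} (hG : G = Set.univ ∨ G = Metric.ball 0 1)
    {f : ℂ → ℂ} (hf : DifferentiableOn ℂ f G) {r M : ℝ}
    (hr : Metric.closedBall 0 r ⊆ G) (hM : ∀ w : ℂ, ‖w‖ ≤ r → ‖f w‖ ≤ M) :
    ∀ m : ℕ, DifferentiableOn ℂ (volterra^[m] f) G ∧
      ∀ z : ℂ, ‖z‖ ≤ r → ‖volterra^[m] f z‖ ≤ ‖z‖ ^ m / m.factorial * M := by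
  intro m
  induction m with
  | zero => exact ⟨by simpa using hf, fun z hz => by simpa using hM z hz⟩
  | succ m ih =>
    rw [Function.iterate_succ_apply']
    refine ⟨volterra_diffOn hG ih.1, fun z hz => ?_⟩
    set g := volterra^[m] f with hgdef
    have hzG : z ∈ G := hr (by rwa [Metric.mem_closedBall, dist_zero_right])
    have hM0 : 0 ≤ M := le_trans (norm_nonneg _) (hM z hz)
    have hnorm_t : ∀ t : ℝ, t ∈ Set.Icc (0:ℝ) 1 → ‖(t : ℂ) * z‖ = t * ‖z‖ := by
      intro t ht
      rw [norm_mul, Complex.norm_real, Real.norm_eq_abs, abs_of_nonneg ht.1]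
    have hcont : ContinuousOn (fun t : ℝ => g ((t : ℂ) * z)) (Set.Icc (0:ℝ) 1) :=
      ih.1.continuousOn.comp (Complex.continuous_ofReal.mul continuous_const).continuousOn
        (fun t ht => star_mem hG hzG ht)
    have hIcc : Set.uIcc (0:ℝ) 1 = Set.Icc 0 1 := Set.uIcc_of_le zero_le_one
    have hint : IntervalIntegrable (fun t : ℝ => g ((t : ℂ) * z)) MeasureTheory.volume 0 1 :=
      (hcont.mono (by rw [hIcc])).intervalIntegrable
    have hbd : ‖∫ t in (0:ℝ)..1, g ((t : ℂ) * z)‖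
        ≤ ∫ t in (0:ℝ)..1, t ^ m * (‖z‖ ^ m / m.factorial * M) := by
      refine le_trans (intervalIntegral.norm_integral_le_integral_norm zero_le_one) ?_
      apply intervalIntegral.integral_mono_on zero_le_one hint.norm
        (Continuous.intervalIntegrable (by continuity) _ _)
      · intro t ht'
        have htz : ‖(t : ℂ) * z‖ ≤ r := by
          rw [hnorm_t t ht']
          calc t * ‖z‖ ≤ 1 * ‖z‖ :=
                mul_le_mul_of_nonneg_right ht'.2 (norm_nonneg _)
            _ ≤ r := by rw [one_mul]; exact hz
        calc ‖g ((t : ℂ) * z)‖ ≤ ‖(t : ℂ) * z‖ ^ m / m.factorial * M :=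
              ih.2 _ htz
          _ = t ^ m * (‖z‖ ^ m / m.factorial * M) := by
              rw [hnorm_t t ht', mul_pow]; ring
    have hipow : (∫ t in (0:ℝ)..1, t ^ m * (‖z‖ ^ m / m.factorial * M))
        = (‖z‖ ^ m / m.factorial * M) / (m + 1) := by
      rw [intervalIntegral.integral_mul_const, integral_pow]
      simp
      ring
    calc ‖volterra g z‖ = ‖z‖ * ‖∫ t in (0:ℝ)..1, g ((t : ℂ) * z)‖ := by
          rw [volterra, norm_mul]
      _ ≤ ‖z‖ * ((‖z‖ ^ m / m.factorial * M) / (m + 1)) := by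
          rw [← hipow]
          exact mul_le_mul_of_nonneg_left hbd (norm_nonneg _)
      _ = ‖z‖ ^ (m + 1) / (m + 1).factorial * M := by
          rw [Nat.factorial_succ, pow_succ]
          push_cast
          have h1 : (m.factorial : ℝ) ≠ 0 := Nat.cast_ne_zero.2 m.factorial_ne_zero
          have h2 : (m : ℝ) + 1 ≠ 0 := by positivity
          field_simp

/-- Theorem 4.4 (ii): on `H(G)` for `G ∈ {ℂ, 𝔻}`, the Volterra operator maps `H(G)` to `H(G)`,
is power bounded (equicontinuity of all powers w.r.t. the sup-seminorms on compact sets), and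
is (uniformly) mean ergodic: the Cesàro means of every `f ∈ H(G)` converge in `H(G)`,
i.e. uniformly on every compact subset of `G`. -/
theorem statement17 (G : Set ℂ) (hG : G = Set.univ ∨ G = Metric.ball 0 1) :
    (∀ f : ℂ → ℂ, DifferentiableOn ℂ f G → DifferentiableOn ℂ (volterra f) G) ∧
    (∀ K : Set ℂ, K ⊆ G → IsCompact K → ∃ L : Set ℂ, L ⊆ G ∧ IsCompact L ∧ ∃ C > (0 : ℝ),
      ∀ m : ℕ, 1 ≤ m → ∀ f : ℂ → ℂ, DifferentiableOn ℂ f G → ∀ z ∈ K,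
        ‖volterra^[m] f z‖ ≤ C * ⨆ y ∈ L, ‖f y‖) ∧
    (∀ f : ℂ → ℂ, DifferentiableOn ℂ f G → ∃ g : ℂ → ℂ, DifferentiableOn ℂ g G ∧
      ∀ K : Set ℂ, K ⊆ G → IsCompact K →
        TendstoUniformlyOn (fun n => cesaroC volterra n f) g atTop K) := by
  have hrad : ∀ K : Set ℂ, K ⊆ G → IsCompact K → ∃ r : ℝ, 0 ≤ r ∧
      K ⊆ Metric.closedBall 0 r ∧ Metric.closedBall 0 r ⊆ G := by
    intro K hKG hK
    rcases hG with rfl | rfl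
    · obtain ⟨r, hr⟩ := hK.isBounded.subset_closedBall 0
      exact ⟨max r 0, le_max_right _ _,
        hr.trans (Metric.closedBall_subset_closedBall (le_max_left _ _)), Set.subset_univ _⟩
    · rcases K.eq_empty_or_nonempty with rfl | hne
      · exact ⟨0, le_rfl, by simp, Metric.closedBall_subset_ball one_pos⟩
      · obtain ⟨z₀, hz₀K, hmax⟩ := hK.exists_isMaxOn hne continuous_norm.continuousOn
        refine ⟨‖z₀‖, norm_nonneg _, fun z hz => ?_, Metric.closedBall_subset_ball ?_⟩
        · rw [Metric.mem_closedBall, dist_zero_right]; exact hmax hz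
        · simpa [Metric.mem_ball, dist_zero_right] using hKG hz₀K
  refine ⟨fun f hf => volterra_diffOn hG hf, ?_, ?_⟩
  · -- power boundedness
    intro K hKG hK
    obtain ⟨r, hr0, hKr, hrG⟩ := hrad K hKG hK
    refine ⟨Metric.closedBall 0 r, hrG, isCompact_closedBall 0 r, Real.exp r,
      Real.exp_pos r, ?_⟩
    intro m hm f hf z hzK
    set L := Metric.closedBall (0:ℂ) r with hLdef
    set M := ⨆ y ∈ L, ‖f y‖ with hMdef
    have hL : ∀ w : ℂ, ‖w‖ ≤ r → w ∈ L := fun w hw => by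
      rw [hLdef, Metric.mem_closedBall, dist_zero_right]; exact hw
    obtain ⟨B, hB⟩ := (isCompact_closedBall (0:ℂ) r).exists_bound_of_continuousOn
      (hf.continuousOn.mono hrG)
    have bdd : BddAbove (Set.range fun y => ⨆ _ : y ∈ L, ‖f y‖) := by
      refine ⟨max B 0, ?_⟩
      rintro x ⟨y, rfl⟩
      exact Real.iSup_le (fun hy => le_max_of_le_left (hB y hy)) (le_max_right _ _)
    have hM : ∀ w : ℂ, ‖w‖ ≤ r → ‖f w‖ ≤ M := by
      intro w hw
      have h1 : ‖f w‖ ≤ ⨆ _ : w ∈ L, ‖f w‖ :=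
        le_ciSup (f := fun _ : w ∈ L => ‖f w‖)
          ⟨‖f w‖, by rintro x ⟨_, rfl⟩; exact le_rfl⟩ (hL w hw)
      exact h1.trans (le_ciSup bdd w)
    have hz : ‖z‖ ≤ r := by
      have := hKr hzK
      rwa [Metric.mem_closedBall, dist_zero_right] at this
    refine ((iter_bound hG hf hrG hM m).2 z hz).trans ?_
    have hM0 : 0 ≤ M := le_trans (norm_nonneg _) (hM 0 (by simpa using hr0))
    have hfac : ‖z‖ ^ m / m.factorial ≤ Real.exp r := by
      have h0 : ‖z‖ ^ m / m.factorial ≤ r ^ m / m.factorial := by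
        have : ‖z‖ ^ m ≤ r ^ m := pow_le_pow_left₀ (norm_nonneg _) hz m
        gcongr
      refine h0.trans ?_
      have h1 : r ^ m / m.factorial ≤ ∑ i ∈ range (m+1), r ^ i / i.factorial :=
        Finset.single_le_sum (f := fun i => r ^ i / (i.factorial : ℝ))
          (fun i _ => by positivity) (Finset.self_mem_range_succ m)
      exact h1.trans (Real.sum_le_exp_of_nonneg hr0 (m+1))
    exact mul_le_mul_of_nonneg_right hfac hM0
  · -- mean ergodicity
    intro f hf
    refine ⟨fun _ => 0, differentiableOn_const 0, ?_⟩
    intro K hKG hK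
    obtain ⟨r, hr0, hKr, hrG⟩ := hrad K hKG hK
    obtain ⟨B, hB⟩ := (isCompact_closedBall (0:ℂ) r).exists_bound_of_continuousOn
      (hf.continuousOn.mono hrG)
    have hM : ∀ w : ℂ, ‖w‖ ≤ r → ‖f w‖ ≤ B := fun w hw =>
      hB w (by rw [Metric.mem_closedBall, dist_zero_right]; exact hw)
    have hB0 : 0 ≤ B := le_trans (norm_nonneg _) (hM 0 (by simpa using hr0))
    have key : ∀ n : ℕ, 1 ≤ n → ∀ z ∈ K,
        ‖cesaroC volterra n f z‖ ≤ (n:ℝ)⁻¹ * (Real.exp r * B) := by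
      intro n hn z hzK
      have hz : ‖z‖ ≤ r := by
        have := hKr hzK
        rwa [Metric.mem_closedBall, dist_zero_right] at this
      have happ : cesaroC volterra n f z
          = (n:ℂ)⁻¹ * ∑ m ∈ Icc 1 n, volterra^[m] f z := by
        simp [cesaroC]
      rw [happ, norm_mul, norm_inv, Complex.norm_natCast]
      have hsum : ‖∑ m ∈ Icc 1 n, volterra^[m] f z‖ ≤ Real.exp r * B := by
        calc ‖∑ m ∈ Icc 1 n, volterra^[m] f z‖
            ≤ ∑ m ∈ Icc 1 n, ‖volterra^[m] f z‖ := norm_sum_le _ _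
          _ ≤ ∑ m ∈ Icc 1 n, r ^ m / m.factorial * B := by
              refine Finset.sum_le_sum (fun m hm => ?_)
              refine ((iter_bound hG hf hrG hM m).2 z hz).trans ?_
              have : ‖z‖ ^ m ≤ r ^ m := pow_le_pow_left₀ (norm_nonneg _) hz m
              gcongr
          _ = (∑ m ∈ Icc 1 n, r ^ m / m.factorial) * B := by rw [Finset.sum_mul]
          _ ≤ Real.exp r * B := by
              refine mul_le_mul_of_nonneg_right ?_ hB0
              refine le_trans (Finset.sum_le_sum_of_subset_of_nonneg ?_ ?_)
                (Real.sum_le_exp_of_nonneg hr0 (n+1))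
              · intro m hm
                rw [Finset.mem_range]
                exact Nat.lt_succ_of_le (Finset.mem_Icc.1 hm).2
              · intro i _ _; positivity
      exact mul_le_mul_of_nonneg_left hsum (by positivity)
    rw [Metric.tendstoUniformlyOn_iff]
    intro ε hε
    have hc : Tendsto (fun n : ℕ => (n:ℝ)⁻¹ * (Real.exp r * B)) atTop (nhds 0) := by
      simpa using tendsto_inv_atTop_nhds_zero_nat.mul_const (Real.exp r * B)
    filter_upwards [hc.eventually_lt_const hε, eventually_ge_atTop 1] with n h1 h2 z hzK
    simpa [dist_eq_norm] using lt_of_le_of_lt (key n h2 z hzK) h1
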